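/- Let 0 < β ≤ γ ≤ 1 and let n = (n_k)_{k≥0} be a strictly increasing sequence of positive integers with n_k/n_{k+1} → 0 as k → ∞. Then underline dim_B C(β,γ,n) ≤ β. -/

import Mathlib

open Filter MeasureTheory Metric Set ENNReal Classical
open scoped Topology

noncomputable section

/-- `coverNumber δ A` is the smallest number of sets of diameter at most `δ`
needed to cover `A`. -/
noncomputable def coverNumber {X : Type*} [MetricSpace X] (δ : ℝ) (A : Set X) : ℕ :=
  sInf {n : ℕ | ∃ f : Fin n → Set X, A ⊆ ⋃ i, f i ∧ ∀ i, Metric.diam (f i) ≤ δ}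

/-- Lower box dimension. -/
noncomputable def lowerBoxDim {X : Type*} [MetricSpace X] (A : Set X) : ℝ :=
  Filter.liminf (fun δ : ℝ => Real.log (coverNumber δ A : ℝ) / (-Real.log δ)) (𝓝[>] (0:ℝ))

/-- Upper box dimension. -/
noncomputable def upperBoxDim {X : Type*} [MetricSpace X] (A : Set X) : ℝ :=
  Filter.limsup (fun δ : ℝ => Real.log (coverNumber δ A : ℝ) / (-Real.log δ)) (𝓝[>] (0:ℝ))

/-- Lower modified box dimension: the infimum over countable covers of `A` by bounded
sets of the supremum of the lower box dimensions of the pieces. -/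
noncomputable def lowerMBDim {X : Type*} [MetricSpace X] (A : Set X) : ℝ :=
  sInf {d : ℝ | ∃ E : ℕ → Set X, A ⊆ ⋃ i, E i ∧
    ∀ i, Bornology.IsBounded (E i) ∧ lowerBoxDim (E i) ≤ d}

/-- The packing pre-premeasure at scale `δ`: supremum of `Σ (2 rᵢ)^α` over countable
families of pairwise disjoint closed balls centred in `A` with radii in `(0, δ]`. -/
noncomputable def packingPreAt {X : Type*} [MetricSpace X] (α δ : ℝ) (A : Set X) : ℝ≥0∞ :=
  ⨆ (t : Set ℕ) (x : ℕ → X) (r : ℕ → ℝ)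
    (_ : ∀ i ∈ t, x i ∈ A ∧ 0 < r i ∧ r i ≤ δ)
    (_ : t.PairwiseDisjoint fun i => Metric.closedBall (x i) (r i)),
    ∑' i : t, ENNReal.ofReal ((2 * r (i : ℕ)) ^ α)

/-- The `α`-dimensional packing premeasure. -/
noncomputable def packingPre {X : Type*} [MetricSpace X] (α : ℝ) (A : Set X) : ℝ≥0∞ :=
  ⨅ (δ : ℝ) (_ : 0 < δ), packingPreAt α δ A

/-- The `α`-dimensional packing measure. -/
noncomputable def packingMeasure {X : Type*} [MetricSpace X] (α : ℝ) (A : Set X) : ℝ≥0∞ :=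
  ⨅ (E : ℕ → Set X) (_ : A ⊆ ⋃ i, E i), ∑' i, packingPre α (E i)

/-- The packing dimension. -/
noncomputable def packingDim {X : Type*} [MetricSpace X] (A : Set X) : ℝ :=
  sInf {α : ℝ | 0 ≤ α ∧ packingMeasure α A = 0}

/-- The Assouad dimension. -/
noncomputable def assouadDim {X : Type*} [MetricSpace X] (A : Set X) : ℝ :=
  sInf {α : ℝ | 0 ≤ α ∧ ∃ c ρ : ℝ, 0 < c ∧ 0 < ρ ∧
    ∀ r R : ℝ, 0 < r → r < R → R ≤ ρ → ∀ x ∈ A,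
      (coverNumber r (Metric.ball x R ∩ A) : ℝ) ≤ c * (R / r) ^ α}

/-- The contraction ratio `c_m` of the construction `C(β,γ,n)`: it equals `2^{-1/γ}` if
`n_{2k+1} ≤ m < n_{2k+2}` for some `k`, and `2^{-1/β}` otherwise. -/
noncomputable def cseq (β γ : ℝ) (n : ℕ → ℕ) (m : ℕ) : ℝ :=
  if ∃ k, n (2*k+1) ≤ m ∧ m < n (2*k+2) then (2:ℝ) ^ (-(1/γ)) else (2:ℝ) ^ (-(1/β))

/-- The map `S_v(x) = c x + v (1 - c)` for `v ∈ {0,1}`. -/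
noncomputable def Smap (c : ℝ) (v : Bool) (x : ℝ) : ℝ :=
  c * x + (if v then 1 - c else 0)

/-- `Iaux β γ n m w = S_{m,w_1}(S_{m+1,w_2}(⋯ (S_{m+len-1,w_len}([0,1]))))`. -/
noncomputable def Iaux (β γ : ℝ) (n : ℕ → ℕ) : ℕ → List Bool → Set ℝ
  | _, [] => Set.Icc 0 1
  | m, v :: w => Smap (cseq β γ n m) v '' Iaux β γ n (m + 1) w

/-- The interval `I_w = S_{1,w_1} ∘ ⋯ ∘ S_{m,w_m}([0,1])` for a binary word `w`. -/
noncomputable def Iw (β γ : ℝ) (n : ℕ → ℕ) (w : List Bool) : Set ℝ :=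
  Iaux β γ n 1 w

/-- `C_m(β,γ,n)`: union of the intervals `I_w` over binary words of length `m`. -/
noncomputable def CsetN (β γ : ℝ) (n : ℕ → ℕ) (m : ℕ) : Set ℝ :=
  ⋃ w ∈ {w : List Bool | w.length = m}, Iw β γ n w

/-- The set `C(β,γ,n) = ⋂_m C_m(β,γ,n)`. -/
noncomputable def Cset (β γ : ℝ) (n : ℕ → ℕ) : Set ℝ :=
  ⋂ m, CsetN β γ n m


lemma my_cseq_nonneg (β γ : ℝ) (n : ℕ → ℕ) (m : ℕ) : 0 ≤ cseq β γ n m := by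
  unfold cseq; split <;> positivity

lemma my_cseq_le_one {β γ : ℝ} (hβ : 0 < β) (hγ : 0 < γ) (n : ℕ → ℕ) (m : ℕ) :
    cseq β γ n m ≤ 1 := by
  unfold cseq; split
  · exact Real.rpow_le_one_of_one_le_of_nonpos one_le_two (by rw [neg_nonpos]; positivity)
  · exact Real.rpow_le_one_of_one_le_of_nonpos one_le_two (by rw [neg_nonpos]; positivity)

lemma my_cseq_eq_beta {β γ : ℝ} {n : ℕ → ℕ} (hn : StrictMono n) {k m : ℕ}
    (h1 : n (2*k) ≤ m) (h2 : m < n (2*k+1)) : cseq β γ n m = (2:ℝ) ^ (-(1/β)) := by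
  unfold cseq
  rw [if_neg]
  rintro ⟨k', hk1, hk2⟩
  rcases lt_trichotomy (2*k'+1) (2*k) with h | h | h
  · have : n (2*k'+2) ≤ n (2*k) := hn.monotone (by omega)
    omega
  · omega
  · have : n (2*k+1) ≤ n (2*k'+1) := hn.monotone (by omega)
    omega

lemma my_Iaux_subset {β γ : ℝ} (hβ : 0 < β) (hγ : 0 < γ) (n : ℕ → ℕ) :
    ∀ (w : List Bool) (m : ℕ), Iaux β γ n m w ⊆ Set.Icc 0 1
  | [], m => by rw [Iaux]
  | v :: w, m => by
    rw [Iaux]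
    rintro x ⟨y, hy, rfl⟩
    have hy' := my_Iaux_subset hβ hγ n w (m+1) hy
    have hc0 := my_cseq_nonneg β γ n m
    have hc1 := my_cseq_le_one hβ hγ n m
    obtain ⟨h0, h1⟩ := hy'
    simp only [Smap, Set.mem_Icc]
    constructor
    · cases v <;> simp <;> nlinarith
    · cases v <;> simp <;> nlinarith

lemma my_diam_Iaux {β γ : ℝ} (hβ : 0 < β) (hγ : 0 < γ) (n : ℕ → ℕ) :
    ∀ (w : List Bool) (m : ℕ),
      Metric.diam (Iaux β γ n m w) ≤ ∏ j ∈ Finset.range w.length, cseq β γ n (m + j)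
  | [], m => by
    rw [Iaux]
    simp [Real.diam_Icc (by norm_num : (0:ℝ) ≤ 1)]
  | v :: w, m => by
    have hc0 := my_cseq_nonneg β γ n m
    have hb : Bornology.IsBounded (Iaux β γ n (m+1) w) :=
      (Metric.isBounded_Icc (0:ℝ) 1).subset (my_Iaux_subset hβ hγ n w (m+1))
    have hlip : LipschitzWith ⟨cseq β γ n m, hc0⟩ (Smap (cseq β γ n m) v) := by
      apply LipschitzWith.of_dist_le_mul
      intro x y
      simp only [Smap, Real.dist_eq, NNReal.coe_mk]
      rw [show cseq β γ n m * x + (if v then 1 - cseq β γ n m else 0) -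
          (cseq β γ n m * y + (if v then 1 - cseq β γ n m else 0)) =
          cseq β γ n m * (x - y) by ring, abs_mul, abs_of_nonneg hc0]
      exact le_rfl
    have h1 := hlip.diam_image_le _ hb
    rw [Iaux]
    calc Metric.diam (Smap (cseq β γ n m) v '' Iaux β γ n (m + 1) w)
        ≤ cseq β γ n m * Metric.diam (Iaux β γ n (m+1) w) := h1
      _ ≤ cseq β γ n m * ∏ j ∈ Finset.range w.length, cseq β γ n (m + 1 + j) :=
          mul_le_mul_of_nonneg_left (my_diam_Iaux hβ hγ n w (m+1)) hc0
      _ = ∏ j ∈ Finset.range (v :: w).length, cseq β γ n (m + j) := by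
          rw [List.length_cons, Finset.prod_range_succ']
          rw [show m + 0 = m from rfl, mul_comm]
          congr 1
          exact Finset.prod_congr rfl fun j _ => by rw [show m + (j+1) = m + 1 + j by omega]

lemma my_coverNumber_le (β γ : ℝ) (n : ℕ → ℕ) (δ : ℝ) (m : ℕ)
    (hd : ∀ w : List Bool, w.length = m → Metric.diam (Iw β γ n w) ≤ δ) :
    coverNumber δ (Cset β γ n) ≤ 2 ^ m := by
  apply Nat.sInf_le
  have e : (Fin m → Bool) ≃ Fin (2 ^ m) :=
    Fintype.equivFinOfCardEq (by simp)
  refine ⟨fun i => Iw β γ n (List.ofFn (e.symm i)), ?_, ?_⟩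
  · intro x hx
    have hx' : x ∈ CsetN β γ n m := Set.mem_iInter.1 hx m
    simp only [CsetN, Set.mem_iUnion, Set.mem_setOf_eq] at hx'
    obtain ⟨w, hw, hxw⟩ := hx'
    subst hw
    refine Set.mem_iUnion.2 ⟨e w.get, ?_⟩
    rw [Equiv.symm_apply_apply, List.ofFn_get]
    exact hxw
  · intro i
    exact hd _ (by simp)

/-- `lower dim_B C(β,γ,n) ≤ β`. -/
theorem statement7 (β γ : ℝ) (hβ : 0 < β) (hβγ : β ≤ γ) (hγ1 : γ ≤ 1)
    (n : ℕ → ℕ) (hn : StrictMono n) (hnpos : ∀ k, 0 < n k)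
    (hnr : Filter.Tendsto (fun k => (n k : ℝ) / (n (k+1) : ℝ)) Filter.atTop (nhds 0)) :
    lowerBoxDim (Cset β γ n) ≤ β := by
  have hγ : 0 < γ := lt_of_lt_of_le hβ hβγ
  set r : ℝ := (2:ℝ) ^ (-(1/β)) with hrdef
  have hr0 : 0 < r := Real.rpow_pos_of_pos two_pos _
  have hr1 : r < 1 := Real.rpow_lt_one_of_one_lt_of_neg one_lt_two (by
    exact neg_lt_zero.mpr (by positivity))
  set d : ℕ → ℕ := fun k => n (2*k+1) - n (2*k) with hddef
  set δs : ℕ → ℝ := fun k => r ^ d k with hδsdef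
  have hlt : ∀ k, n (2*k) < n (2*k+1) := fun k => hn (by omega)
  have hd1 : ∀ k, 1 ≤ d k := fun k => by have := hlt k; simp only [hddef]; omega
  -- product bound
  have hprod : ∀ k, ∏ j ∈ Finset.range (n (2*k+1)), cseq β γ n (1 + j) ≤ δs k := by
    intro k
    have h0 := hnpos (2*k)
    set T : Finset ℕ := Finset.Ico (n (2*k) - 1) (n (2*k+1) - 1) with hT
    have hsub : T ⊆ Finset.range (n (2*k+1)) := by
      intro j hj
      simp only [hT, Finset.mem_Ico] at hj
      simp only [Finset.mem_range]
      omega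
    have hTval : ∀ j ∈ T, cseq β γ n (1 + j) = r := by
      intro j hj
      simp only [hT, Finset.mem_Ico] at hj
      exact my_cseq_eq_beta (k := k) hn (by omega) (by omega)
    have hcard : T.card = d k := by
      have := hlt k
      simp only [hT, Nat.card_Ico, hddef]
      omega
    calc ∏ j ∈ Finset.range (n (2*k+1)), cseq β γ n (1 + j)
        = (∏ j ∈ Finset.range (n (2*k+1)) \ T, cseq β γ n (1 + j)) *
            ∏ j ∈ T, cseq β γ n (1 + j) := (Finset.prod_sdiff hsub).symm
      _ ≤ 1 * ∏ j ∈ T, cseq β γ n (1 + j) := by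
          apply mul_le_mul_of_nonneg_right
          · exact Finset.prod_le_one (fun i _ => my_cseq_nonneg _ _ _ _)
              (fun i _ => my_cseq_le_one hβ hγ n _)
          · exact Finset.prod_nonneg fun i _ => my_cseq_nonneg _ _ _ _
      _ = δs k := by
          rw [one_mul, Finset.prod_congr rfl hTval, Finset.prod_const, hcard]
  -- covering number bound
  have hcov : ∀ k, coverNumber (δs k) (Cset β γ n) ≤ 2 ^ (n (2*k+1)) := by
    intro k
    apply my_coverNumber_le
    intro w hw
    have h1 := my_diam_Iaux hβ hγ n w 1
    rw [hw] at h1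
    exact h1.trans (hprod k)
  -- tendsto facts
  have h2k : Tendsto (fun k : ℕ => 2*k) atTop atTop := by
    apply tendsto_atTop_mono _ tendsto_id
    intro k
    simp only [id_eq]
    omega
  have hq : Tendsto (fun k => (n (2*k) : ℝ) / (n (2*k+1) : ℝ)) atTop (𝓝 0) := hnr.comp h2k
  have hdtop : Tendsto d atTop atTop := by
    apply tendsto_atTop_mono' atTop ?_ tendsto_id
    filter_upwards [hq.eventually_lt_const (by norm_num : (0:ℝ) < 1/2)] with k hk
    have hm1 : (0:ℝ) < (n (2*k+1) : ℝ) := by exact_mod_cast hnpos _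
    rw [div_lt_iff₀ hm1] at hk
    have h2 : 2 * n (2*k) < n (2*k+1) := by
      have : (2 * n (2*k) : ℝ) < n (2*k+1) := by push_cast; linarith
      exact_mod_cast this
    have h3 : 2*k+1 ≤ n (2*k+1) := hn.le_apply
    have hgoal : k ≤ n (2*k+1) - n (2*k) := by omega
    simpa [hddef, id_eq] using hgoal
  have hδ0 : Tendsto δs atTop (𝓝 0) :=
    (tendsto_pow_atTop_nhds_zero_of_lt_one hr0.le hr1).comp hdtop
  have hδmem : Tendsto δs atTop (𝓝[>] 0) :=
    tendsto_nhdsWithin_of_tendsto_nhds_of_eventually_within _ hδ0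
      (Eventually.of_forall fun k => pow_pos hr0 _)
  -- ratio tendsto
  have hdr : ∀ k, ((d k : ℕ) : ℝ) = (n (2*k+1) : ℝ) - (n (2*k) : ℝ) := by
    intro k
    have := (hlt k).le
    simp only [hddef]
    exact Nat.cast_sub this
  have hrat : Tendsto (fun k => β * ((n (2*k+1) : ℝ) / ((d k : ℕ) : ℝ))) atTop (𝓝 β) := by
    have h1 : Tendsto (fun k => (1 - (n (2*k):ℝ)/(n (2*k+1):ℝ))⁻¹) atTop (𝓝 1) := by
      have h2 := ((tendsto_const_nhds (x := (1:ℝ))).sub hq).inv₀ (by norm_num)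
      simpa using h2
    have heq : (fun k => (n (2*k+1) : ℝ) / ((d k : ℕ) : ℝ)) =
        fun k => (1 - (n (2*k):ℝ)/(n (2*k+1):ℝ))⁻¹ := by
      funext k
      rw [hdr k]
      have hm1 : (0:ℝ) < (n (2*k+1) : ℝ) := by exact_mod_cast hnpos _
      rw [one_sub_div (ne_of_gt hm1), inv_div]
    have h3 := h1.const_mul β
    rw [mul_one] at h3
    exact h3.congr fun k => by rw [congrFun heq k]
  -- per-k bound on the ratio
  have hbound : ∀ k, Real.log (coverNumber (δs k) (Cset β γ n) : ℝ) / (-Real.log (δs k)) ≤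
      β * ((n (2*k+1) : ℝ) / ((d k : ℕ) : ℝ)) := by
    intro k
    have hlog2 : (0:ℝ) < Real.log 2 := Real.log_pos one_lt_two
    have hdk : (0:ℝ) < ((d k : ℕ) : ℝ) := by exact_mod_cast hd1 k
    have hden : -Real.log (δs k) = ((d k : ℕ):ℝ) * Real.log 2 / β := by
      simp only [hδsdef]
      rw [Real.log_pow, hrdef, Real.log_rpow two_pos]
      field_simp
    have hnum : Real.log (coverNumber (δs k) (Cset β γ n) : ℝ) ≤
        (n (2*k+1) : ℝ) * Real.log 2 := by
      rcases Nat.eq_zero_or_pos (coverNumber (δs k) (Cset β γ n)) with h | h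
      · rw [h]
        simp only [Nat.cast_zero, Real.log_zero]
        positivity
      · calc Real.log (coverNumber (δs k) (Cset β γ n) : ℝ)
            ≤ Real.log ((2:ℝ) ^ (n (2*k+1))) := by
              apply Real.log_le_log (by exact_mod_cast h)
              exact_mod_cast hcov k
          _ = (n (2*k+1) : ℝ) * Real.log 2 := by rw [Real.log_pow]
    rw [hden, div_le_iff₀ (by positivity)]
    calc Real.log (coverNumber (δs k) (Cset β γ n) : ℝ) ≤ (n (2*k+1) : ℝ) * Real.log 2 := hnum
      _ = β * ((n (2*k+1) : ℝ) / ((d k : ℕ) : ℝ)) * (((d k : ℕ):ℝ) * Real.log 2 / β) := by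
          field_simp
  -- conclude via liminf
  rw [lowerBoxDim, liminf_eq]
  apply Real.sSup_le _ hβ.le
  intro a ha
  simp only [Set.mem_setOf_eq] at ha
  have h1 : ∀ᶠ k in atTop, a ≤
      Real.log (coverNumber (δs k) (Cset β γ n) : ℝ) / (-Real.log (δs k)) :=
    hδmem.eventually ha
  have h2 : ∀ᶠ k in atTop, a ≤ β * ((n (2*k+1) : ℝ) / ((d k : ℕ) : ℝ)) :=
    h1.mono fun k hk => hk.trans (hbound k)
  exact ge_of_tendsto hrat h2


end
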